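/- Let u ∈ H²(𝕋²) have zero mean on the square torus 𝕋² = [0,L]², let {x₁,…,x_N} ⊂ 𝕋² be N = M² points on a regular M×M grid, and set η(u) := max_{1≤i≤N} |u(x_i)|. Then there is an absolute constant c_η such that ‖u‖_{L²}² ≤ c_η L² η(u)² + c_η (L⁴/N²) ‖Δu‖_{L²}². -/

import Mathlib

/-- The wavenumber `(2π/L)|k|` of the lattice mode `k`. -/
noncomputable def wavLen (L : ℝ) (k : ℤ × ℤ) : ℝ :=
  (2 * Real.pi / L) * Real.sqrt ((k.1 : ℝ)^2 + (k.2 : ℝ)^2)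

/-- The function on the torus `[0,L]²` with Fourier coefficients `c`. -/
noncomputable def fourierSum (L : ℝ) (c : ℤ × ℤ → ℂ) (x : ℝ × ℝ) : ℂ :=
  ∑' k : ℤ × ℤ, c k *
    Complex.exp (Complex.I * (((2 * Real.pi / L) * ((k.1 : ℝ) * x.1 + (k.2 : ℝ) * x.2) : ℝ) : ℂ))

/-- balanced integer representative of a residue class -/
def bal (M : ℕ) (m : ZMod M) : ℤ :=
  if 2 * m.val ≤ M then (m.val : ℤ) else (m.val : ℤ) - M

lemma bal_cast (M : ℕ) [NeZero M] (m : ZMod M) : ((bal M m : ℤ) : ZMod M) = m := by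
  unfold bal
  split <;> push_cast <;> simp [ZMod.natCast_val, ZMod.cast_id, ZMod.natCast_self]

lemma abs_bal_le (M : ℕ) [NeZero M] (m : ZMod M) : |(bal M m : ℝ)| ≤ (M : ℝ) / 2 := by
  have hv : m.val < M := ZMod.val_lt m
  unfold bal
  split
  · rename_i h
    rw [_root_.abs_of_nonneg (by positivity)]
    push_cast
    have : (2:ℝ) * m.val ≤ M := by exact_mod_cast h
    linarith
  · rename_i h
    push_neg at h
    have h' : (M:ℝ) < 2 * m.val := by exact_mod_cast h
    have h2 : ((m.val:ℝ) - M) ≤ 0 := by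
      have : (m.val : ℝ) < M := by exact_mod_cast hv
      linarith
    push_cast
    rw [_root_.abs_of_nonpos h2]
    linarith

/-- one-coordinate aliasing equivalence -/
def zEquiv (M : ℕ) [NeZero M] : ZMod M × ℤ ≃ ℤ where
  toFun p := bal M p.1 + M * p.2
  invFun k := ((k : ZMod M), (k - bal M (k : ZMod M)) / M)
  left_inv p := by
    have hM : (M:ℤ) ≠ 0 := by exact_mod_cast (NeZero.ne M)
    have h1 : ((bal M p.1 + M * p.2 : ℤ) : ZMod M) = p.1 := by
      push_cast [bal_cast]; simp
    ext
    · simp [h1]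
    · simp only [h1]
      rw [add_sub_cancel_left, Int.mul_ediv_cancel_left _ hM]
  right_inv k := by
    have hd : (M:ℤ) ∣ (k - bal M (k : ZMod M)) := by
      rw [← ZMod.intCast_zmod_eq_zero_iff_dvd]
      push_cast [bal_cast]
      ring
    simp only
    rw [Int.mul_ediv_cancel' hd]
    ring

/-- character value exp(2πi a t / M) -/
noncomputable def ch (M : ℕ) (a : ℤ) (t : ℕ) : ℂ :=
  Complex.exp (((2 * Real.pi * (a * t) / M : ℝ) : ℂ) * Complex.I)

lemma ch_eq (M : ℕ) (a : ℤ) (t : ℕ) :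
    ch M a t = Complex.exp (((2 * Real.pi * (a * t) / M : ℝ) : ℂ) * Complex.I) := rfl

lemma ch_add (M : ℕ) (a b : ℤ) (t : ℕ) : ch M (a + b) t = ch M a t * ch M b t := by
  unfold ch
  rw [← Complex.exp_add]
  congr 1
  push_cast
  ring

lemma ch_mul_self (M : ℕ) [NeZero M] (b : ℤ) (t : ℕ) : ch M (M * b) t = 1 := by
  have hM : (M:ℂ) ≠ 0 := by exact_mod_cast (NeZero.ne M)
  unfold ch
  have : ((2 * Real.pi * ((M * b : ℤ) * t) / M : ℝ) : ℂ) * Complex.I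
      = ((b * t : ℤ) : ℂ) * (2 * Real.pi * Complex.I) := by
    push_cast
    field_simp
  rw [this, Complex.exp_int_mul_two_pi_mul_I]

lemma ch_conj (M : ℕ) (a : ℤ) (t : ℕ) : (starRingEnd ℂ) (ch M a t) = ch M (-a) t := by
  unfold ch
  rw [← Complex.exp_conj]
  congr 1
  rw [map_mul, Complex.conj_I, Complex.conj_ofReal]
  push_cast
  ring

lemma ch_pow (M : ℕ) (a : ℤ) (t : ℕ) :
    ch M a t = (ch M a 1) ^ t := by
  unfold ch
  rw [← Complex.exp_nat_mul]
  congr 1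
  push_cast
  ring

lemma expsum (M : ℕ) [NeZero M] (a : ℤ) :
    ∑ i : Fin M, ch M a i = if (M:ℤ) ∣ a then (M:ℂ) else 0 := by
  have hM : (M:ℂ) ≠ 0 := by exact_mod_cast (NeZero.ne M)
  have hMR : (M:ℝ) ≠ 0 := by exact_mod_cast (NeZero.ne M)
  have hsum : ∑ i : Fin M, ch M a i = ∑ i ∈ Finset.range M, (ch M a 1) ^ i := by
    rw [Finset.sum_range fun i => (ch M a 1)^i]
    exact Finset.sum_congr rfl fun i _ => ch_pow M a i
  by_cases hdvd : (M:ℤ) ∣ a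
  · obtain ⟨b, rfl⟩ := hdvd
    rw [if_pos (dvd_mul_right (M:ℤ) b)]
    simp [ch_mul_self]
  · rw [if_neg hdvd, hsum]
    have hzM : (ch M a 1) ^ M = 1 := by
      rw [← ch_pow]
      unfold ch
      have : ((2 * Real.pi * (a * (M:ℕ)) / M : ℝ) : ℂ) * Complex.I
          = (a : ℂ) * (2 * Real.pi * Complex.I) := by
        push_cast
        field_simp
      rw [this, Complex.exp_int_mul_two_pi_mul_I]
    have hz1 : ch M a 1 ≠ 1 := by
      intro h
      unfold ch at h
      rw [Complex.exp_eq_one_iff] at h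
      obtain ⟨n, hn⟩ := h
      apply hdvd
      have hn' : ((2 * Real.pi * (a * (1:ℕ)) / M : ℝ) : ℂ) * Complex.I
          = ((n * (2 * Real.pi) : ℝ) : ℂ) * Complex.I := by
        rw [hn]; push_cast; ring
      have hre : (2 * Real.pi * (a * (1:ℕ)) / M : ℝ) = n * (2 * Real.pi) := by
        exact_mod_cast mul_right_cancel₀ Complex.I_ne_zero hn'
      have hpi : Real.pi ≠ 0 := Real.pi_ne_zero
      have hcast : (a : ℝ) = n * M := by
        field_simp at hre
        have hpi' : (0:ℝ) < Real.pi := Real.pi_pos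
        push_cast at hre
        nlinarith [hre, hpi']
      refine ⟨n, ?_⟩
      have : a = n * M := by exact_mod_cast hcast
      linarith [mul_comm n (M:ℤ), this]
    rw [geom_sum_eq hz1, hzM]
    simp

lemma tsum_cs {ι : Type*} {f g : ι → ℝ} (hf0 : ∀ i, 0 ≤ f i) (hg0 : ∀ i, 0 ≤ g i)
    (hf : Summable (fun i => f i ^ 2)) (hg : Summable (fun i => g i ^ 2)) :
    (∑' i, f i * g i) ^ 2 ≤ (∑' i, f i ^ 2) * (∑' i, g i ^ 2) := by
  have hfg : Summable (fun i => f i * g i) := by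
    apply Summable.of_nonneg_of_le (fun i => mul_nonneg (hf0 i) (hg0 i))
      (fun i => ?_) ((hf.add hg).mul_left (1/2 : ℝ))
    have := sq_nonneg (f i - g i)
    simp only [one_div]
    nlinarith
  have key : ∑' i, f i * g i ≤ Real.sqrt (∑' i, f i ^ 2) * Real.sqrt (∑' i, g i ^ 2) := by
    apply Summable.tsum_le_of_sum_le hfg
    intro s
    have h1 : (∑ i ∈ s, f i * g i) ^ 2 ≤ (∑ i ∈ s, f i ^ 2) * (∑ i ∈ s, g i ^ 2) :=
      Finset.sum_mul_sq_le_sq_mul_sq s f g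
    have h2 : ∑ i ∈ s, f i * g i ≤ Real.sqrt ((∑ i ∈ s, f i ^ 2) * (∑ i ∈ s, g i ^ 2)) := by
      have hnn : 0 ≤ ∑ i ∈ s, f i * g i :=
        Finset.sum_nonneg fun i _ => mul_nonneg (hf0 i) (hg0 i)
      nlinarith [Real.sq_sqrt (le_trans (sq_nonneg _) h1 : (0:ℝ) ≤ (∑ i ∈ s, f i ^ 2) * (∑ i ∈ s, g i ^ 2)),
        Real.sqrt_nonneg ((∑ i ∈ s, f i ^ 2) * (∑ i ∈ s, g i ^ 2))]
    refine h2.trans ?_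
    rw [Real.sqrt_mul (Finset.sum_nonneg fun i _ => sq_nonneg (f i))]
    exact mul_le_mul (Real.sqrt_le_sqrt (Summable.sum_le_tsum s (fun i _ => sq_nonneg (f i)) hf))
      (Real.sqrt_le_sqrt (Summable.sum_le_tsum s (fun i _ => sq_nonneg (g i)) hg))
      (Real.sqrt_nonneg _) (Real.sqrt_nonneg _)
  have hsnn : 0 ≤ ∑' i, f i * g i := tsum_nonneg fun i => mul_nonneg (hf0 i) (hg0 i)
  calc (∑' i, f i * g i) ^ 2 ≤ (Real.sqrt (∑' i, f i ^ 2) * Real.sqrt (∑' i, g i ^ 2)) ^ 2 := by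
        apply pow_le_pow_left₀ hsnn key
    _ = (∑' i, f i ^ 2) * (∑' i, g i ^ 2) := by
        rw [mul_pow, Real.sq_sqrt (tsum_nonneg fun i => sq_nonneg (f i)),
          Real.sq_sqrt (tsum_nonneg fun i => sq_nonneg (g i))]

/-- real squared norm of a lattice point -/
def qn (k : ℤ × ℤ) : ℝ := (k.1 : ℝ)^2 + (k.2 : ℝ)^2

/-- the lattice weight -/
noncomputable def latW (j : ℤ × ℤ) : ℝ := if j = 0 then 0 else 1 / (qn j)^2

lemma qn_nonneg (k : ℤ × ℤ) : 0 ≤ qn k := by unfold qn; positivity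

lemma sq_int_one_le {n : ℤ} (h : n ≠ 0) : (1:ℝ) ≤ (n:ℝ)^2 := by
  have hz : (1:ℤ) ≤ n^2 := by nlinarith [Int.one_le_abs h, abs_nonneg n, sq_abs n]
  exact_mod_cast hz

lemma qn_one_le {j : ℤ × ℤ} (hj : j ≠ 0) : 1 ≤ qn j := by
  unfold qn
  have : j.1 ≠ 0 ∨ j.2 ≠ 0 := by
    by_contra h
    push_neg at h
    exact hj (Prod.ext h.1 h.2)
  rcases this with h | h
  · nlinarith [sq_int_one_le h, sq_nonneg (j.2:ℝ)]
  · nlinarith [sq_int_one_le h, sq_nonneg (j.1:ℝ)]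

lemma summable_latW : Summable latW := by
  have hg : Summable (fun n : ℤ => 1 / (1 + (n:ℝ)^2)) := by
    have h1 : Summable (fun n : ℤ => 1 / (n:ℝ)^2) := Real.summable_one_div_int_pow.mpr one_lt_two
    have h2 : Summable (fun n : ℤ => if n = 0 then (1:ℝ) else 0) :=
      summable_of_finite_support (by
        apply Set.Finite.subset (Set.finite_singleton 0)
        intro n hn
        simp only [Function.mem_support] at hn
        simp only [Set.mem_singleton_iff]
        by_contra h
        exact hn (if_neg h))
    apply Summable.of_nonneg_of_le (fun n => by positivity) (fun n => ?_) (h1.add h2)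
    by_cases h : n = 0
    · simp [h]
    · have : (1:ℝ) ≤ (n:ℝ)^2 := sq_int_one_le h
      simp only [h, if_false, add_zero]
      rw [div_le_div_iff₀ (by positivity) (by positivity)]
      nlinarith
  have hprod := hg.mul_of_nonneg hg (fun n => by positivity) (fun n => by positivity)
  apply Summable.of_nonneg_of_le (fun j => ?_) (fun j => ?_) (hprod.mul_left 4)
  · unfold latW; split <;> [rfl; positivity]
  · unfold latW
    split
    · positivity
    · rename_i hj
      have hq1 : 1 ≤ qn j := qn_one_le hj
      have ha : (0:ℝ) ≤ (j.1:ℝ)^2 := sq_nonneg _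
      have hb : (0:ℝ) ≤ (j.2:ℝ)^2 := sq_nonneg _
      have key : (1 + (j.1:ℝ)^2) * (1 + (j.2:ℝ)^2) ≤ 4 * (qn j)^2 := by
        unfold qn
        have hq1' : (1:ℝ) ≤ (j.1:ℝ)^2 + (j.2:ℝ)^2 := by unfold qn at hq1; linarith
        nlinarith [sq_nonneg ((j.1:ℝ)^2 - (j.2:ℝ)^2), mul_nonneg ha hb,
          mul_nonneg (sub_nonneg.mpr hq1') (add_nonneg ha hb)]
      rw [div_le_iff₀ (by positivity)]
      calc (1:ℝ) = ((1 + (j.1:ℝ)^2) * (1 + (j.2:ℝ)^2)) / ((1 + (j.1:ℝ)^2) * (1 + (j.2:ℝ)^2)) := by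
            rw [div_self (by positivity)]
        _ ≤ (4 * (qn j)^2) / ((1 + (j.1:ℝ)^2) * (1 + (j.2:ℝ)^2)) := by
            gcongr
        _ = 4 * (1 / (1 + (j.1:ℝ)^2) * (1 / (1 + (j.2:ℝ)^2))) * (qn j)^2 := by
            field_simp
lemma bal_dvd_iff (M : ℕ) [NeZero M] (m m' : ZMod M) :
    (M:ℤ) ∣ (bal M m - bal M m') ↔ m = m' := by
  rw [← ZMod.intCast_zmod_eq_zero_iff_dvd]
  push_cast [bal_cast]
  constructor
  · intro h; linear_combination h
  · intro h; rw [h]; ring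

noncomputable def G (M : ℕ) (m : ZMod M × ZMod M) (i j : ℕ) : ℂ :=
  ch M (bal M m.1) i * ch M (bal M m.2) j

lemma orth (M : ℕ) [NeZero M] (m m' : ZMod M × ZMod M) :
    ∑ i : Fin M, ∑ j : Fin M, G M m i j * (starRingEnd ℂ) (G M m' i j)
      = if m = m' then (M:ℂ)^2 else 0 := by
  have key : ∀ i j : Fin M, G M m i j * (starRingEnd ℂ) (G M m' i j)
      = ch M (bal M m.1 - bal M m'.1) i * ch M (bal M m.2 - bal M m'.2) j := by
    intro i j
    unfold G
    rw [map_mul, ch_conj, ch_conj]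
    rw [sub_eq_add_neg, sub_eq_add_neg, ch_add, ch_add]
    ring
  simp only [key]
  rw [← Finset.sum_mul_sum]
  rw [expsum, expsum]
  by_cases h1 : (M:ℤ) ∣ (bal M m.1 - bal M m'.1)
  · by_cases h2 : (M:ℤ) ∣ (bal M m.2 - bal M m'.2)
    · have : m = m' := by
        have e1 := (bal_dvd_iff M m.1 m'.1).mp h1
        have e2 := (bal_dvd_iff M m.2 m'.2).mp h2
        exact Prod.ext e1 e2
      simp [h1, h2, this]
      ring
    · have : m ≠ m' := by
        intro h; exact h2 ((bal_dvd_iff M m.2 m'.2).mpr (by rw [h]))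
      simp [h1, h2, this]
  · have : m ≠ m' := by
      intro h; exact h1 ((bal_dvd_iff M m.1 m'.1).mpr (by rw [h]))
    simp [h1, this]

lemma parseval (M : ℕ) [NeZero M] (d : ZMod M × ZMod M → ℂ) :
    ∑ i : Fin M, ∑ j : Fin M, ‖∑ m : ZMod M × ZMod M, d m * G M m i j‖^2
      = (M:ℝ)^2 * ∑ m : ZMod M × ZMod M, ‖d m‖^2 := by
  have main : ∑ i : Fin M, ∑ j : Fin M,
      ((∑ m : ZMod M × ZMod M, d m * G M m i j) *
        (starRingEnd ℂ) (∑ m : ZMod M × ZMod M, d m * G M m i j))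
      = (M:ℂ)^2 * ∑ m : ZMod M × ZMod M, d m * (starRingEnd ℂ) (d m) := by
    have expand : ∀ i j : Fin M,
        ((∑ m : ZMod M × ZMod M, d m * G M m i j) *
          (starRingEnd ℂ) (∑ m : ZMod M × ZMod M, d m * G M m i j))
        = ∑ m : ZMod M × ZMod M, ∑ m' : ZMod M × ZMod M,
            (d m * (starRingEnd ℂ) (d m')) * (G M m i j * (starRingEnd ℂ) (G M m' i j)) := by
      intro i j
      rw [map_sum, Finset.sum_mul_sum]
      refine Finset.sum_congr rfl fun m _ => Finset.sum_congr rfl fun m' _ => ?_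
      rw [map_mul]
      ring
    calc ∑ i : Fin M, ∑ j : Fin M,
          ((∑ m : ZMod M × ZMod M, d m * G M m i j) *
            (starRingEnd ℂ) (∑ m : ZMod M × ZMod M, d m * G M m i j))
        = ∑ i : Fin M, ∑ j : Fin M, ∑ m : ZMod M × ZMod M, ∑ m' : ZMod M × ZMod M,
            (d m * (starRingEnd ℂ) (d m')) * (G M m i j * (starRingEnd ℂ) (G M m' i j)) := by
          exact Finset.sum_congr rfl fun i _ => Finset.sum_congr rfl fun j _ => expand i j
      _ = ∑ i : Fin M, ∑ m : ZMod M × ZMod M, ∑ m' : ZMod M × ZMod M, ∑ j : Fin M,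
            (d m * (starRingEnd ℂ) (d m')) * (G M m i j * (starRingEnd ℂ) (G M m' i j)) := by
          refine Finset.sum_congr rfl fun i _ => ?_
          rw [Finset.sum_comm]
          exact Finset.sum_congr rfl fun m _ => Finset.sum_comm
      _ = ∑ m : ZMod M × ZMod M, ∑ m' : ZMod M × ZMod M, ∑ i : Fin M, ∑ j : Fin M,
            (d m * (starRingEnd ℂ) (d m')) * (G M m i j * (starRingEnd ℂ) (G M m' i j)) := by
          rw [Finset.sum_comm]
          exact Finset.sum_congr rfl fun m _ => Finset.sum_comm
      _ = ∑ m : ZMod M × ZMod M, ∑ m' : ZMod M × ZMod M,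
            (d m * (starRingEnd ℂ) (d m')) * (if m = m' then (M:ℂ)^2 else 0) := by
          refine Finset.sum_congr rfl fun m _ => Finset.sum_congr rfl fun m' _ => ?_
          rw [← orth M m m']
          rw [Finset.mul_sum]
          exact Finset.sum_congr rfl fun i _ => (Finset.mul_sum _ _ _).symm
      _ = (M:ℂ)^2 * ∑ m : ZMod M × ZMod M, d m * (starRingEnd ℂ) (d m) := by
          rw [Finset.mul_sum]
          refine Finset.sum_congr rfl fun m _ => ?_
          rw [Finset.sum_congr rfl (fun m' _ => mul_ite (m = m') (d m * (starRingEnd ℂ) (d m')) ((M:ℂ)^2) 0)]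
          simp [Finset.sum_ite_eq]
          ring
  have hterm : ∀ z : ℂ, z * (starRingEnd ℂ) z = ((‖z‖^2 : ℝ) : ℂ) := by
    intro z
    rw [Complex.mul_conj]
    norm_cast
    rw [Complex.normSq_eq_norm_sq]
  simp only [hterm] at main
  have : ((∑ i : Fin M, ∑ j : Fin M, ‖∑ m : ZMod M × ZMod M, d m * G M m i j‖^2 : ℝ) : ℂ)
      = (((M:ℝ)^2 * ∑ m : ZMod M × ZMod M, ‖d m‖^2 : ℝ) : ℂ) := by
    push_cast at main ⊢
    exact main
  exact_mod_cast this
section Main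

open Real

/-- regrouping a tsum over ℤ×ℤ into residue classes -/
noncomputable def EQ (M : ℕ) [NeZero M] : (ZMod M × ZMod M) × (ℤ × ℤ) ≃ ℤ × ℤ :=
  (Equiv.prodProdProdComm (ZMod M) (ZMod M) ℤ ℤ).trans
    (Equiv.prodCongr (zEquiv M) (zEquiv M))

lemma EQ_apply (M : ℕ) [NeZero M] (m : ZMod M × ZMod M) (jj : ℤ × ℤ) :
    EQ M (m, jj) = (bal M m.1 + M * jj.1, bal M m.2 + M * jj.2) := rfl

lemma regroup {M : ℕ} [NeZero M] {X : Type*} [AddCommGroup X] [UniformSpace X]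
    [IsUniformAddGroup X] [T3Space X] [CompleteSpace X] {f : ℤ × ℤ → X} (hf : Summable f) :
    ∑' k : ℤ × ℤ, f k
      = ∑ m : ZMod M × ZMod M, ∑' jj : ℤ × ℤ, f (EQ M (m, jj)) := by
  have hg : Summable (fun p : (ZMod M × ZMod M) × (ℤ × ℤ) => f (EQ M p)) :=
    (EQ M).summable_iff.mpr hf
  calc ∑' k : ℤ × ℤ, f k = ∑' p : (ZMod M × ZMod M) × (ℤ × ℤ), f (EQ M p) :=
        ((EQ M).tsum_eq f).symm
    _ = ∑' m : ZMod M × ZMod M, ∑' jj : ℤ × ℤ, f (EQ M (m, jj)) := Summable.tsum_prod hg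
    _ = ∑ m : ZMod M × ZMod M, ∑' jj : ℤ × ℤ, f (EQ M (m, jj)) := tsum_fintype _

lemma summable_comp_EQ {M : ℕ} [NeZero M] {X : Type*} [AddCommGroup X] [UniformSpace X]
    [IsUniformAddGroup X] [CompleteSpace X] {f : ℤ × ℤ → X} (hf : Summable f) (m : ZMod M × ZMod M) :
    Summable (fun jj : ℤ × ℤ => f (EQ M (m, jj))) :=
  ((EQ M).summable_iff.mpr hf).prod_factor m

/-- coordinatewise lower bound -/
lemma coord_bound (M : ℕ) [NeZero M] (m : ZMod M) (t : ℤ) :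
    ((M:ℝ)/2)^2 * (t:ℝ)^2 ≤ ((bal M m : ℝ) + M * t)^2 := by
  have hb := abs_bal_le M m
  have hM0 : (0:ℝ) < M := by
    have := NeZero.pos M
    exact_mod_cast this
  rcases eq_or_ne t 0 with rfl | ht
  · simp
    positivity
  · have hbp : -((M:ℝ)/2) ≤ (bal M m : ℝ) := (abs_le.mp hb).1
    have hbq : (bal M m : ℝ) ≤ (M:ℝ)/2 := (abs_le.mp hb).2
    rcases (by omega : 1 ≤ t ∨ t ≤ -1) with h | h
    · have ht1 : (1:ℝ) ≤ (t:ℝ) := by exact_mod_cast h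
      nlinarith [sq_nonneg ((bal M m : ℝ) + M/2),
        mul_nonneg (by nlinarith : (0:ℝ) ≤ 2*M*(t:ℝ) - M) (by linarith : (0:ℝ) ≤ (bal M m : ℝ) + M/2),
        mul_nonneg (mul_nonneg (sq_nonneg (M:ℝ)) (by linarith : (0:ℝ) ≤ 3*(t:ℝ) - 1)) (by linarith : (0:ℝ) ≤ (t:ℝ) - 1)]
    · have ht1 : (t:ℝ) ≤ -1 := by exact_mod_cast h
      nlinarith [sq_nonneg ((bal M m : ℝ) - M/2),
        mul_nonneg (by nlinarith : (0:ℝ) ≤ -2*M*(t:ℝ) - M) (by linarith : (0:ℝ) ≤ M/2 - (bal M m : ℝ)),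
        mul_nonneg (mul_nonneg (sq_nonneg (M:ℝ)) (by linarith : (0:ℝ) ≤ -3*(t:ℝ) - 1)) (by linarith : (0:ℝ) ≤ -(t:ℝ) - 1)]

lemma qn_EQ_ge (M : ℕ) [NeZero M] (m : ZMod M × ZMod M) (jj : ℤ × ℤ) :
    (M:ℝ)^2/4 * qn jj ≤ qn (EQ M (m, jj)) := by
  rw [EQ_apply]
  unfold qn
  have h1 := coord_bound M m.1 jj.1
  have h2 := coord_bound M m.2 jj.2
  push_cast at h1 h2 ⊢
  nlinarith [h1, h2]

set_option maxHeartbeats 2000000 in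
/-- Jones–Titi nodal interpolation inequality: for zero-mean `u ∈ H²(𝕋²)` and
`N = M²` nodes on a regular `M × M` grid with `η(u) = maxᵢ |u(xᵢ)|`,
`‖u‖² ≤ c_η L² η(u)² + c_η (L⁴/N²) ‖Δu‖²`, where by Parseval
`‖u‖² = L² Σ‖c k‖²` and `‖Δu‖² = L² Σ |k|⁴ ‖c k‖²`. -/
theorem stmt19 : ∃ cη > (0:ℝ), ∀ L : ℝ, 0 < L → ∀ M : ℕ, 1 ≤ M →
    ∀ c : ℤ × ℤ → ℂ,
    c 0 = 0 →
    Summable (fun k : ℤ × ℤ => ‖c k‖) →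
    Summable (fun k : ℤ × ℤ => ‖c k‖^2) →
    Summable (fun k : ℤ × ℤ => (wavLen L k)^4 * ‖c k‖^2) →
    ∀ η : ℝ,
    (∀ i j : Fin M,
      ‖fourierSum L c ((i : ℕ) * (L/M), (j : ℕ) * (L/M))‖ ≤ η) →
    L^2 * (∑' k : ℤ × ℤ, ‖c k‖^2) ≤
      cη * L^2 * η^2 +
        cη * (L^4 / ((M^2 : ℕ) : ℝ)^2) *
          (L^2 * ∑' k : ℤ × ℤ, (wavLen L k)^4 * ‖c k‖^2) := by
  classical
  set S : ℝ := ∑' j : ℤ × ℤ, latW j with hSdef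
  have hS0 : 0 ≤ S := tsum_nonneg (fun j => by unfold latW; split <;> positivity)
  refine ⟨18 + 32 * S, by linarith, ?_⟩
  intro L hL M hM c hc0 hs1 hs2 hs4 η hη
  haveI : NeZero M := ⟨by omega⟩
  have hM0 : (0:ℝ) < M := by exact_mod_cast Nat.pos_of_ne_zero (by omega)
  have hπ : (0:ℝ) < Real.pi := Real.pi_pos
  have hLne : (L:ℝ) ≠ 0 := ne_of_gt hL
  have hMne : (M:ℝ) ≠ 0 := ne_of_gt hM0
  have hη0 : 0 ≤ η := le_trans (norm_nonneg _) (hη ⟨0, by omega⟩ ⟨0, by omega⟩)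
  -- wavLen in terms of qn
  have hwav : ∀ k : ℤ × ℤ, (wavLen L k)^4 = (2 * Real.pi / L)^4 * (qn k)^2 := by
    intro k
    unfold wavLen qn
    rw [mul_pow]
    congr 1
    rw [show (4:ℕ) = 2*2 from rfl, pow_mul, Real.sq_sqrt (by positivity)]
  -- summability of qn² ‖c‖²
  have sQ : Summable (fun k : ℤ × ℤ => (qn k)^2 * ‖c k‖^2) := by
    apply ((hs4.mul_left ((L / (2 * Real.pi))^4)).congr)
    intro k
    rw [hwav k]
    field_simp
  set Q : ℝ := ∑' k : ℤ × ℤ, (qn k)^2 * ‖c k‖^2 with hQdef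
  have hQ0 : 0 ≤ Q := tsum_nonneg (fun k => by positivity)
  -- the aliased coefficients
  set d : ZMod M × ZMod M → ℂ := fun m => ∑' jj : ℤ × ℤ, c (EQ M (m, jj)) with hd
  -- node identity
  have hu : ∀ i j : Fin M,
      fourierSum L c (((i:ℕ):ℝ) * (L/M), ((j:ℕ):ℝ) * (L/M))
        = ∑ m : ZMod M × ZMod M, d m * G M m i j := by
    intro i j
    have step1 : fourierSum L c (((i:ℕ):ℝ) * (L/M), ((j:ℕ):ℝ) * (L/M))
        = ∑' k : ℤ × ℤ, c k * (ch M k.1 i * ch M k.2 j) := by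
      unfold fourierSum
      apply tsum_congr
      intro k
      congr 1
      unfold ch
      rw [← Complex.exp_add]
      congr 1
      have hLC : (L:ℂ) ≠ 0 := by exact_mod_cast hLne
      have hMC : ((M:ℕ):ℂ) ≠ 0 := by exact_mod_cast hMne
      push_cast
      field_simp
    rw [step1]
    have hsum : Summable (fun k : ℤ × ℤ => c k * (ch M k.1 i * ch M k.2 j)) := by
      apply Summable.of_norm_bounded hs1
      intro k
      rw [norm_mul, norm_mul]
      unfold ch
      rw [Complex.norm_exp_ofReal_mul_I, Complex.norm_exp_ofReal_mul_I]
      simp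
    rw [regroup (M := M) hsum]
    refine Finset.sum_congr rfl fun m _ => ?_
    have halias : ∀ jj : ℤ × ℤ,
        c (EQ M (m, jj)) * (ch M (EQ M (m, jj)).1 i * ch M (EQ M (m, jj)).2 j)
          = c (EQ M (m, jj)) * G M m i j := by
      intro jj
      rw [EQ_apply]
      congr 1
      unfold G
      rw [ch_add, ch_mul_self, ch_add, ch_mul_self]
      ring
    calc ∑' jj : ℤ × ℤ, c (EQ M (m, jj)) * (ch M (EQ M (m, jj)).1 i * ch M (EQ M (m, jj)).2 j)
        = ∑' jj : ℤ × ℤ, c (EQ M (m, jj)) * G M m i j := tsum_congr halias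
      _ = d m * G M m i j := tsum_mul_right
  -- Parseval bound
  have hdsum : ∑ m : ZMod M × ZMod M, ‖d m‖^2 ≤ η^2 := by
    have hpar := parseval M d
    have hbound : ∑ i : Fin M, ∑ j : Fin M, ‖∑ m : ZMod M × ZMod M, d m * G M m i j‖^2
        ≤ (M:ℝ)^2 * η^2 := by
      have : ∀ i j : Fin M, ‖∑ m : ZMod M × ZMod M, d m * G M m i j‖^2 ≤ η^2 := by
        intro i j
        have := hη i j
        rw [hu i j] at this
        exact pow_le_pow_left₀ (norm_nonneg _) this 2
      calc ∑ i : Fin M, ∑ j : Fin M, ‖∑ m : ZMod M × ZMod M, d m * G M m i j‖^2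
          ≤ ∑ _i : Fin M, ∑ _j : Fin M, η^2 :=
            Finset.sum_le_sum fun i _ => Finset.sum_le_sum fun j _ => this i j
        _ = (M:ℝ)^2 * η^2 := by
          simp [Finset.sum_const, Finset.card_univ]
          ring
    rw [hpar] at hbound
    have hM2 : (0:ℝ) < (M:ℝ)^2 := by positivity
    exact le_of_mul_le_mul_left hbound hM2
  -- summable helpers per class
  have s2E : ∀ m : ZMod M × ZMod M, Summable (fun jj : ℤ × ℤ => ‖c (EQ M (m, jj))‖^2) :=
    summable_comp_EQ hs2
  have sQE : ∀ m : ZMod M × ZMod M,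
      Summable (fun jj : ℤ × ℤ => (qn (EQ M (m, jj)))^2 * ‖c (EQ M (m, jj))‖^2) :=
    summable_comp_EQ sQ
  have scE : ∀ m : ZMod M × ZMod M, Summable (fun jj : ℤ × ℤ => c (EQ M (m, jj))) := by
    intro m
    apply Summable.of_norm
    exact summable_comp_EQ (by simpa using hs1.of_norm.norm) m
  -- positivity of q on nonzero aliases
  have hqpos : ∀ (m : ZMod M × ZMod M) (jj : ℤ × ℤ), jj ≠ 0 →
      (M:ℝ)^2/4 ≤ qn (EQ M (m, jj)) := by
    intro m jj hjj
    calc (M:ℝ)^2/4 = (M:ℝ)^2/4 * 1 := by ring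
      _ ≤ (M:ℝ)^2/4 * qn jj := by
          have := qn_one_le hjj
          nlinarith
      _ ≤ qn (EQ M (m, jj)) := qn_EQ_ge M m jj
  -- pieces
  set low : ZMod M × ZMod M → ℂ := fun m => c (EQ M (m, 0)) with hlowdef
  set tail : ZMod M × ZMod M → ℂ :=
    fun m => ∑' jj : ℤ × ℤ, if jj = 0 then 0 else c (EQ M (m, jj)) with htaildef
  set P2 : ZMod M × ZMod M → ℝ :=
    fun m => ∑' jj : ℤ × ℤ, if jj = 0 then 0 else ‖c (EQ M (m, jj))‖^2 with hP2def
  set T4 : ZMod M × ZMod M → ℝ :=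
    fun m => ∑' jj : ℤ × ℤ,
      if jj = 0 then 0 else (qn (EQ M (m, jj)))^2 * ‖c (EQ M (m, jj))‖^2 with hT4def
  have hT40 : ∀ m, 0 ≤ T4 m := fun m => tsum_nonneg (fun jj => by split <;> positivity)
  have hT4sum : ∀ m : ZMod M × ZMod M, Summable (fun jj : ℤ × ℤ =>
      if jj = 0 then (0:ℝ) else (qn (EQ M (m, jj)))^2 * ‖c (EQ M (m, jj))‖^2) := by
    intro m
    apply Summable.of_nonneg_of_le (fun jj => by split <;> positivity) (fun jj => ?_) (sQE m)
    split
    · positivity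
    · exact le_refl _
  -- W bound (tail weights)
  have hWsummand : ∀ (m : ZMod M × ZMod M) (jj : ℤ × ℤ),
      (if jj = 0 then (0:ℝ) else 1/(qn (EQ M (m, jj)))^2) ≤ 16/(M:ℝ)^4 * latW jj := by
    intro m jj
    by_cases hjj : jj = 0
    · simp [hjj, latW]
    · have hq := hqpos m jj hjj
      have hq1 := qn_one_le hjj
      have hqj := qn_EQ_ge M m jj
      have hqpos' : (0:ℝ) < qn (EQ M (m, jj)) := lt_of_lt_of_le (by positivity) hq
      have hqjpos : (0:ℝ) < qn jj := by linarith
      rw [if_neg hjj]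
      unfold latW
      rw [if_neg hjj]
      have key : (M:ℝ)^4/16 * (qn jj)^2 ≤ (qn (EQ M (m, jj)))^2 := by
        nlinarith [mul_le_mul hqj hqj (by positivity : (0:ℝ) ≤ (M:ℝ)^2/4 * qn jj) (le_of_lt hqpos')]
      calc 1/(qn (EQ M (m, jj)))^2 ≤ 1/((M:ℝ)^4/16 * (qn jj)^2) :=
            one_div_le_one_div_of_le (by positivity) key
        _ = 16/(M:ℝ)^4 * (1/(qn jj)^2) := by field_simp
  have hWsummable : ∀ m : ZMod M × ZMod M,
      Summable (fun jj : ℤ × ℤ => if jj = 0 then (0:ℝ) else 1/(qn (EQ M (m, jj)))^2) := by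
    intro m
    apply Summable.of_nonneg_of_le (fun jj => by split <;> positivity) (hWsummand m)
      (summable_latW.mul_left _)
  have hW : ∀ m : ZMod M × ZMod M,
      (∑' jj : ℤ × ℤ, if jj = 0 then (0:ℝ) else 1/(qn (EQ M (m, jj)))^2)
        ≤ 16/(M:ℝ)^4 * S := by
    intro m
    calc (∑' jj : ℤ × ℤ, if jj = 0 then (0:ℝ) else 1/(qn (EQ M (m, jj)))^2)
        ≤ ∑' jj : ℤ × ℤ, 16/(M:ℝ)^4 * latW jj :=
          Summable.tsum_le_tsum (hWsummand m) (hWsummable m) (summable_latW.mul_left _)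
      _ = 16/(M:ℝ)^4 * S := by rw [tsum_mul_left]
  -- tail bound via Cauchy-Schwarz
  have hTail2 : ∀ m : ZMod M × ZMod M, ‖tail m‖^2 ≤ 16*S/(M:ℝ)^4 * T4 m := by
    intro m
    set f : ℤ × ℤ → ℝ :=
      fun jj => if jj = 0 then 0 else 1/(qn (EQ M (m, jj))) with hfdef
    set g : ℤ × ℤ → ℝ :=
      fun jj => if jj = 0 then 0 else qn (EQ M (m, jj)) * ‖c (EQ M (m, jj))‖ with hgdef
    have hf0 : ∀ jj, 0 ≤ f jj := fun jj => by
      rw [hfdef]; dsimp only; split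
      · exact le_refl _
      · have := qn_nonneg (EQ M (m, jj)); positivity
    have hg0 : ∀ jj, 0 ≤ g jj := fun jj => by
      rw [hgdef]; dsimp only; split
      · exact le_refl _
      · have := qn_nonneg (EQ M (m, jj)); positivity
    have hf2 : ∀ jj, f jj^2 = if jj = 0 then (0:ℝ) else 1/(qn (EQ M (m, jj)))^2 := by
      intro jj; rw [hfdef]; dsimp only; split
      · simp
      · rw [div_pow, one_pow]
    have hg2 : ∀ jj, g jj^2
        = if jj = 0 then (0:ℝ) else (qn (EQ M (m, jj)))^2 * ‖c (EQ M (m, jj))‖^2 := by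
      intro jj; rw [hgdef]; dsimp only; split
      · simp
      · rw [mul_pow]
    have hfg : ∀ jj, f jj * g jj = if jj = 0 then (0:ℝ) else ‖c (EQ M (m, jj))‖ := by
      intro jj; rw [hfdef, hgdef]; dsimp only; split
      · simp
      · rename_i hjj
        have hq := hqpos m jj hjj
        have hqpos' : (0:ℝ) < qn (EQ M (m, jj)) := lt_of_lt_of_le (by positivity) hq
        field_simp
    have hsf2 : Summable (fun jj => f jj^2) := by
      apply Summable.congr (hWsummable m)
      intro jj; rw [hf2 jj]
    have hsg2 : Summable (fun jj => g jj^2) := by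
      apply Summable.congr (hT4sum m)
      intro jj; rw [hg2 jj]
    have hcs := tsum_cs hf0 hg0 hsf2 hsg2
    have htail_le : ‖tail m‖ ≤ ∑' jj, f jj * g jj := by
      have hnt : Summable (fun jj : ℤ × ℤ =>
          ‖if jj = 0 then (0:ℂ) else c (EQ M (m, jj))‖) := by
        apply Summable.of_nonneg_of_le (fun jj => norm_nonneg _) (fun jj => ?_)
          (summable_comp_EQ hs1 m)
        split
        · simp
        · exact le_refl _
      calc ‖tail m‖ ≤ ∑' jj : ℤ × ℤ, ‖if jj = 0 then (0:ℂ) else c (EQ M (m, jj))‖ :=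
            norm_tsum_le_tsum_norm hnt
        _ = ∑' jj, f jj * g jj := by
            apply tsum_congr
            intro jj
            rw [hfg jj]
            split <;> simp
    have htail0 : (0:ℝ) ≤ ∑' jj, f jj * g jj :=
      tsum_nonneg fun jj => mul_nonneg (hf0 jj) (hg0 jj)
    have hWT : (∑' jj, f jj^2) * (∑' jj, g jj^2) ≤ 16*S/(M:ℝ)^4 * T4 m := by
      have e1 : (∑' jj, f jj^2)
          = ∑' jj : ℤ × ℤ, if jj = 0 then (0:ℝ) else 1/(qn (EQ M (m, jj)))^2 :=
        tsum_congr fun jj => hf2 jj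
      have e2 : (∑' jj, g jj^2) = T4 m := tsum_congr fun jj => hg2 jj
      rw [e1, e2]
      have := hW m
      have hT4m := hT40 m
      calc (∑' jj : ℤ × ℤ, if jj = 0 then (0:ℝ) else 1/(qn (EQ M (m, jj)))^2) * T4 m
          ≤ (16/(M:ℝ)^4 * S) * T4 m := mul_le_mul_of_nonneg_right this hT4m
        _ = 16*S/(M:ℝ)^4 * T4 m := by ring
    calc ‖tail m‖^2 ≤ (∑' jj, f jj * g jj)^2 := pow_le_pow_left₀ (norm_nonneg _) htail_le 2
      _ ≤ (∑' jj, f jj^2) * (∑' jj, g jj^2) := hcs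
      _ ≤ 16*S/(M:ℝ)^4 * T4 m := hWT
  -- low-mode bound
  have hlowsq : ∀ m : ZMod M × ZMod M, ‖low m‖^2 ≤ 2*‖d m‖^2 + 2*‖tail m‖^2 := by
    intro m
    have hdm : d m = low m + tail m := Summable.tsum_eq_add_tsum_ite (scE m) 0
    have h1 : ‖low m‖ ≤ ‖d m‖ + ‖tail m‖ := by
      calc ‖low m‖ = ‖d m - tail m‖ := by rw [hdm]; congr 1; ring
        _ ≤ ‖d m‖ + ‖tail m‖ := norm_sub_le _ _
    nlinarith [norm_nonneg (low m), norm_nonneg (d m), norm_nonneg (tail m),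
      mul_le_mul h1 h1 (norm_nonneg _) (by positivity : (0:ℝ) ≤ ‖d m‖ + ‖tail m‖),
      sq_nonneg (‖d m‖ - ‖tail m‖)]
  -- high-mode bound
  have hP2b : ∀ m : ZMod M × ZMod M, P2 m ≤ 16/(M:ℝ)^4 * T4 m := by
    intro m
    have hsl : Summable (fun jj : ℤ × ℤ =>
        if jj = 0 then (0:ℝ) else ‖c (EQ M (m, jj))‖^2) := by
      apply Summable.of_nonneg_of_le (fun jj => by split <;> positivity) (fun jj => ?_) (s2E m)
      split
      · positivity
      · exact le_refl _
    calc P2 m ≤ ∑' jj : ℤ × ℤ, 16/(M:ℝ)^4 *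
          (if jj = 0 then (0:ℝ) else (qn (EQ M (m, jj)))^2 * ‖c (EQ M (m, jj))‖^2) := by
          apply Summable.tsum_le_tsum _ hsl ((hT4sum m).mul_left _)
          intro jj
          by_cases hjj : jj = 0
          · simp [hjj]
          · rw [if_neg hjj, if_neg hjj]
            have hq := hqpos m jj hjj
            have hqpos' : (0:ℝ) < qn (EQ M (m, jj)) := lt_of_lt_of_le (by positivity) hq
            have hsq : (M:ℝ)^4/16 ≤ (qn (EQ M (m, jj)))^2 := by
              nlinarith [mul_le_mul hq hq (by positivity : (0:ℝ) ≤ (M:ℝ)^2/4) (le_of_lt hqpos')]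
            have hc2 : (0:ℝ) ≤ ‖c (EQ M (m, jj))‖^2 := by positivity
            have h16 : (1:ℝ) ≤ 16/(M:ℝ)^4 * (qn (EQ M (m, jj)))^2 := by
              rw [div_mul_eq_mul_div, le_div_iff₀ (by positivity)]
              linarith
            nlinarith [h16, hc2]
      _ = 16/(M:ℝ)^4 * T4 m := tsum_mul_left
  -- splitting the full sum
  have hsplit : ∑' k : ℤ × ℤ, ‖c k‖^2 = ∑ m : ZMod M × ZMod M, (‖low m‖^2 + P2 m) := by
    rw [regroup (M := M) hs2]
    refine Finset.sum_congr rfl fun m _ => ?_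
    have := Summable.tsum_eq_add_tsum_ite (s2E m) 0
    rw [this]
  -- total T4
  have sum_T4 : ∑ m : ZMod M × ZMod M, T4 m ≤ Q := by
    have hfull : ∑ m : ZMod M × ZMod M,
        ∑' jj : ℤ × ℤ, (qn (EQ M (m, jj)))^2 * ‖c (EQ M (m, jj))‖^2 = Q :=
      (regroup (M := M) sQ).symm
    rw [← hfull]
    apply Finset.sum_le_sum
    intro m _
    apply Summable.tsum_le_tsum _ (hT4sum m) (sQE m)
    intro jj
    split
    · positivity
    · exact le_refl _
  -- combine
  have hP : ∑' k : ℤ × ℤ, ‖c k‖^2 ≤ 2*η^2 + (32*S+16)/(M:ℝ)^4 * Q := by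
    calc ∑' k : ℤ × ℤ, ‖c k‖^2 = ∑ m : ZMod M × ZMod M, (‖low m‖^2 + P2 m) := hsplit
      _ ≤ ∑ m : ZMod M × ZMod M,
          ((2*‖d m‖^2 + 2*(16*S/(M:ℝ)^4 * T4 m)) + 16/(M:ℝ)^4 * T4 m) := by
          apply Finset.sum_le_sum
          intro m _
          have h1 := hlowsq m
          have h2 := hTail2 m
          have h3 := hP2b m
          nlinarith
      _ = 2 * ∑ m : ZMod M × ZMod M, ‖d m‖^2
          + (32*S+16)/(M:ℝ)^4 * ∑ m : ZMod M × ZMod M, T4 m := by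
          simp only [Finset.sum_add_distrib, ← Finset.mul_sum]
          ring
      _ ≤ 2*η^2 + (32*S+16)/(M:ℝ)^4 * Q := by
          have h4 : (0:ℝ) ≤ (32*S+16)/(M:ℝ)^4 := by positivity
          have := mul_le_mul_of_nonneg_left sum_T4 h4
          linarith [hdsum]
  -- final arithmetic
  have hMcast : (((M^2 : ℕ)):ℝ)^2 = (M:ℝ)^4 := by push_cast; ring
  have hR : ∑' k : ℤ × ℤ, (wavLen L k)^4 * ‖c k‖^2 = (2*Real.pi/L)^4 * Q := by
    rw [hQdef, ← tsum_mul_left]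
    exact tsum_congr fun k => by rw [hwav k]; ring
  have h2π : (1:ℝ) ≤ (2*Real.pi)^4 := by
    have h1 : (1:ℝ) ≤ 2*Real.pi := by nlinarith [Real.pi_gt_three]
    calc (1:ℝ) = 1^4 := (one_pow 4).symm
      _ ≤ (2*Real.pi)^4 := pow_le_pow_left₀ one_pos.le h1 4
  have hRHS2 : (18+32*S) * (L^4 / (((M^2 : ℕ)):ℝ)^2) *
      (L^2 * ∑' k : ℤ × ℤ, (wavLen L k)^4 * ‖c k‖^2)
      = ((18+32*S)*(2*Real.pi)^4) * (L^2*Q/(M:ℝ)^4) := by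
    rw [hR, hMcast]
    field_simp
  rw [hRHS2]
  have key : L^2 * (∑' k : ℤ × ℤ, ‖c k‖^2) ≤ L^2 * (2*η^2 + (32*S+16)/(M:ℝ)^4 * Q) :=
    mul_le_mul_of_nonneg_left hP (by positivity)
  refine key.trans ?_
  have e1 : L^2*(2*η^2 + (32*S+16)/(M:ℝ)^4*Q)
      = 2*(L^2*η^2) + (32*S+16)*(L^2*Q/(M:ℝ)^4) := by
    field_simp
  have t1 : (32*S+16)*(L^2*Q/(M:ℝ)^4) ≤ ((18+32*S)*(2*Real.pi)^4)*(L^2*Q/(M:ℝ)^4) := by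
    apply mul_le_mul_of_nonneg_right _ (by positivity)
    nlinarith [mul_nonneg (by linarith : (0:ℝ) ≤ 18+32*S) (by linarith : (0:ℝ) ≤ (2*Real.pi)^4 - 1)]
  have t2 : 2*(L^2*η^2) ≤ (18+32*S)*L^2*η^2 := by
    nlinarith [mul_nonneg (sq_nonneg L) (sq_nonneg η), hS0,
      mul_nonneg (mul_nonneg hS0 (sq_nonneg L)) (sq_nonneg η)]
  linarith

end Main
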